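/- Let u = a^{r_0} b^{s_0} γ ∈ L_∞ where γ is empty or begins with #, and suppose one of the following holds: r_0 = 0, or s_0 ≠ 0, or the x_1-exponents r_1 or s_1 are nonzero. Then the L_∞ representative of ū x_0^{-1} is v = a^{r_0} b^{s_0+1} γ. -/

import Mathlib

/-- The relators of Thompson's group `F` in its standard infinite presentation:
`x_j x_i = x_i x_{j+1}` whenever `i < j`. -/
def thompsonRels : Set (FreeGroup ℕ) :=
  {r | ∃ i j : ℕ, i < j ∧
    r = FreeGroup.of j * FreeGroup.of i * (FreeGroup.of (j + 1))⁻¹ * (FreeGroup.of i)⁻¹}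

/-- Thompson's group `F`, presented by `⟨x_0, x_1, … | x_j x_i = x_i x_{j+1} (i < j)⟩`. -/
abbrev ThompsonF : Type := PresentedGroup thompsonRels

/-- The generator `x_n` of Thompson's group `F`. -/
def x (n : ℕ) : ThompsonF := PresentedGroup.of n

/-- The three-letter symbol alphabet `{a, b, #}` (with `h` denoting `#`). -/
inductive A : Type
  | a | b | h
deriving DecidableEq

instance : Fintype A :=
  Fintype.ofList [A.a, A.b, A.h] (by intro t; cases t <;> simp)

/-- The block `a^r b^s`. -/
def block (r s : ℕ) : List A := List.replicate r A.a ++ List.replicate s A.b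

/-- The string `a^{r 0} b^{s 0} # a^{r 1} b^{s 1} # ⋯ # a^{r M} b^{s M}`. -/
def lword (M : ℕ) (r s : ℕ → ℕ) : List A :=
  List.intercalate [A.h] ((List.range (M + 1)).map fun i => block (r i) (s i))

/-- The exponent conditions: exactly one of `r M, s M` is nonzero, and
`r i * s i > 0` implies `r (i+1) + s (i+1) > 0` for `i < M`. -/
def goodParams (M : ℕ) (r s : ℕ → ℕ) : Prop :=
  ((r M ≠ 0 ∧ s M = 0) ∨ (r M = 0 ∧ s M ≠ 0)) ∧
    ∀ i < M, 0 < r i * s i → 0 < r (i + 1) + s (i + 1)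

/-- The normal form language `L_∞` over `{a, b, #}`: all strings
`a^{r_0} b^{s_0} # ⋯ # a^{r_M} b^{s_M}` satisfying the exponent conditions,
together with the empty string. -/
def Linf : Language A :=
  {w | w = [] ∨ ∃ M r s, goodParams M r s ∧ w = lword M r s}

/-- The group element `x_0^{r_0} ⋯ x_M^{r_M} x_M^{-s_M} ⋯ x_0^{-s_0}` of Thompson's
group `F` encoded by the string `a^{r_0} b^{s_0} # ⋯ # a^{r_M} b^{s_M}`. -/
def gword (M : ℕ) (r s : ℕ → ℕ) : ThompsonF :=
  (((List.range (M + 1)).map fun i => x i ^ r i).prod) *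
    (((List.range (M + 1)).reverse.map fun i => (x i)⁻¹ ^ s i).prod)

/-- The element of Thompson's group `F` represented by a string in `L_∞`:
splitting on `#`, the `i`-th block `a^{r_i} b^{s_i}` contributes `x_i^{r_i}` to the
positive part and `x_i^{-s_i}` to the (reversed) negative part. -/
def evalL (w : List A) : ThompsonF :=
  let bs := (w.splitOn A.h).zipIdx.map Prod.swap
  ((bs.map fun p => x p.1 ^ (p.2.count A.a)).prod) *
    ((bs.reverse.map fun p => (x p.1)⁻¹ ^ (p.2.count A.b)).prod)

/-! ### Auxiliary lemmas -/

lemma h_not_mem_block (r s : ℕ) : A.h ∉ block r s := by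
  simp [block, List.mem_append, List.mem_replicate]

lemma splitOn_no (xs : List A) (h : A.h ∉ xs) : xs.splitOn A.h = [xs] := by
  apply List.splitOnP_eq_single
  intro y hy
  simp only [beq_eq_false_iff_ne]
  rintro rfl; exact h hy

lemma splitOn_mid (xs t : List A) (h : A.h ∉ xs) :
    (xs ++ A.h :: t).splitOn A.h = xs :: t.splitOn A.h := by
  apply List.splitOnP_first
  · intro y hy; simp only [beq_eq_false_iff_ne]; rintro rfl; exact h hy
  · simp

lemma count_a_block (r s : ℕ) : (block r s).count A.a = r := by
  simp [block, List.count_replicate]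

lemma count_b_block (r s : ℕ) : (block r s).count A.b = s := by
  simp [block, List.count_replicate]

lemma lword_zero (r s : ℕ → ℕ) : lword 0 r s = block (r 0) (s 0) := by
  simp [lword, List.intercalate, List.range_succ]

lemma lword_succ (M : ℕ) (r s : ℕ → ℕ) :
    lword (M + 1) r s =
      block (r 0) (s 0) ++ A.h :: lword M (fun i => r (i + 1)) (fun i => s (i + 1)) := by
  simp only [lword, List.range_succ_eq_map, List.map_cons, List.map_map]
  rw [List.intercalate]
  simp only [List.intersperse, List.intercalate, Function.comp]
  rfl

lemma splitOn_lword (M : ℕ) (r s : ℕ → ℕ) :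
    (lword M r s).splitOn A.h = (List.range (M + 1)).map fun i => block (r i) (s i) := by
  apply List.splitOn_intercalate
  · intro l hl
    simp only [List.mem_map] at hl
    obtain ⟨i, -, rfl⟩ := hl
    exact h_not_mem_block _ _
  · simp

lemma evalL_split (w c : List A) (rest : List (List A))
    (hw : w.splitOn A.h = c :: rest) :
    evalL w = (x 0 ^ c.count A.a *
        (((rest.zipIdx 1).map Prod.swap).map fun p => x p.1 ^ p.2.count A.a).prod) *
      (((((rest.zipIdx 1).map Prod.swap).reverse.map fun p => (x p.1)⁻¹ ^ p.2.count A.b).prod) *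
        (x 0)⁻¹ ^ c.count A.b) := by
  simp [evalL, hw, List.zipIdx_cons]

lemma evalL_mul_x0_inv (u v c c' : List A) (rest : List (List A))
    (hu : u.splitOn A.h = c :: rest) (hv : v.splitOn A.h = c' :: rest)
    (ha : c'.count A.a = c.count A.a) (hb : c'.count A.b = c.count A.b + 1) :
    evalL v = evalL u * (x 0)⁻¹ := by
  rw [evalL_split u c rest hu, evalL_split v c' rest hv, ha, hb]
  simp [pow_succ, mul_assoc]

/-- Let `u = a^{r₀} b^{s₀} γ ∈ L_∞` with `γ` empty or beginning with `#`, and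
suppose `r₀ = 0`, or `s₀ ≠ 0`, or the `x_1`-exponents `r₁` or `s₁` (the `a`- and
`b`-counts of the second `#`-block of `u`) are nonzero.  Then the `L_∞`
representative of `ū x_0⁻¹` is `v = a^{r₀} b^{s₀+1} γ`. -/
theorem Linf_mult_x0_inv_easy_case (r₀ s₀ : ℕ) (γ : List A)
    (hγ : γ = [] ∨ ∃ γ', γ = A.h :: γ')
    (hu : List.replicate r₀ A.a ++ List.replicate s₀ A.b ++ γ ∈ Linf)
    (hcond : r₀ = 0 ∨ s₀ ≠ 0 ∨
      (((List.replicate r₀ A.a ++ List.replicate s₀ A.b ++ γ).splitOn A.h).getD 1 []).count A.a ≠ 0 ∨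
      (((List.replicate r₀ A.a ++ List.replicate s₀ A.b ++ γ).splitOn A.h).getD 1 []).count A.b ≠ 0) :
    List.replicate r₀ A.a ++ List.replicate (s₀ + 1) A.b ++ γ ∈ Linf ∧
      evalL (List.replicate r₀ A.a ++ List.replicate (s₀ + 1) A.b ++ γ) =
        evalL (List.replicate r₀ A.a ++ List.replicate s₀ A.b ++ γ) * (x 0)⁻¹ := by
  have hub : List.replicate r₀ A.a ++ List.replicate s₀ A.b ++ γ = block r₀ s₀ ++ γ := rfl
  have hvb : List.replicate r₀ A.a ++ List.replicate (s₀ + 1) A.b ++ γ =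
      block r₀ (s₀ + 1) ++ γ := rfl
  rw [hub] at hu hcond
  rw [hub, hvb]
  rcases hγ with rfl | ⟨γ', rfl⟩
  · -- γ = []
    simp only [List.append_nil] at hu hcond ⊢
    have hsu : (block r₀ s₀).splitOn A.h = [block r₀ s₀] :=
      splitOn_no _ (h_not_mem_block _ _)
    have hsv : (block r₀ (s₀ + 1)).splitOn A.h = [block r₀ (s₀ + 1)] :=
      splitOn_no _ (h_not_mem_block _ _)
    have heval : evalL (block r₀ (s₀ + 1)) = evalL (block r₀ s₀) * (x 0)⁻¹ :=
      evalL_mul_x0_inv _ _ _ _ [] hsu hsv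
        (by rw [count_a_block, count_a_block]) (by rw [count_b_block, count_b_block])
    refine ⟨Or.inr ?_, heval⟩
    rcases hu with hnil | ⟨M, r, s, hg, hw⟩
    · have hr : r₀ = 0 ∧ s₀ = 0 := by
        simpa [block, List.append_eq_nil_iff, List.replicate_eq_nil_iff] using hnil
      obtain ⟨rfl, rfl⟩ := hr
      exact ⟨0, fun _ => 0, fun _ => 1, ⟨Or.inr ⟨rfl, one_ne_zero⟩, by omega⟩,
        by rw [lword_zero]⟩
    cases M with
    | succ N =>
      exfalso
      rw [lword_succ] at hw
      have : A.h ∈ block r₀ s₀ := by rw [hw]; simp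
      exact h_not_mem_block _ _ this
    | zero =>
      rw [lword_zero] at hw
      have hr0 : r₀ = r 0 := by
        have := congrArg (List.count A.a) hw
        rwa [count_a_block, count_a_block] at this
      have hs0 : s₀ = s 0 := by
        have := congrArg (List.count A.b) hw
        rwa [count_b_block, count_b_block] at this
      have hc : r₀ = 0 ∨ s₀ ≠ 0 := by
        rcases hcond with h | h | h | h
        · exact Or.inl h
        · exact Or.inr h
        · rw [hsu] at h; simp at h
        · rw [hsu] at h; simp at h
      have hr00 : r₀ = 0 := by
        rcases hc with h | h
        · exact h
        rcases hg.1 with ⟨_, h2⟩ | ⟨h1, _⟩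
        · omega
        · omega
      subst hr00
      exact ⟨0, fun _ => 0, fun _ => s₀ + 1,
        ⟨Or.inr ⟨rfl, Nat.succ_ne_zero _⟩, by omega⟩, by rw [lword_zero]⟩
  · -- γ = A.h :: γ'
    have hsu : (block r₀ s₀ ++ A.h :: γ').splitOn A.h =
        block r₀ s₀ :: γ'.splitOn A.h := splitOn_mid _ _ (h_not_mem_block _ _)
    have hsv : (block r₀ (s₀ + 1) ++ A.h :: γ').splitOn A.h =
        block r₀ (s₀ + 1) :: γ'.splitOn A.h := splitOn_mid _ _ (h_not_mem_block _ _)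
    have heval := evalL_mul_x0_inv _ _ _ _ _ hsu hsv
      (by rw [count_a_block, count_a_block]) (by rw [count_b_block, count_b_block])
    refine ⟨Or.inr ?_, heval⟩
    rcases hu with hnil | ⟨M, r, s, hg, hw⟩
    · exact absurd hnil (by simp)
    cases M with
    | zero =>
      exfalso
      rw [lword_zero] at hw
      have : A.h ∈ block (r 0) (s 0) := by rw [← hw]; simp
      exact h_not_mem_block _ _ this
    | succ N =>
      rw [lword_succ] at hw
      have hsplit := congrArg (List.splitOn A.h) hw
      rw [splitOn_mid _ _ (h_not_mem_block _ _),
        splitOn_mid _ _ (h_not_mem_block _ _)] at hsplit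
      obtain ⟨hhead, htail⟩ := List.cons.inj hsplit
      have hγ' : γ' = lword N (fun i => r (i + 1)) (fun i => s (i + 1)) := by
        conv_lhs => rw [← List.intercalate_splitOn (xs := γ') A.h]
        rw [htail, List.intercalate_splitOn]
      have hr0 : r₀ = r 0 := by
        have := congrArg (List.count A.a) hhead
        rwa [count_a_block, count_a_block] at this
      have hs0 : s₀ = s 0 := by
        have := congrArg (List.count A.b) hhead
        rwa [count_b_block, count_b_block] at this
      have hblk1 : (γ'.splitOn A.h).getD 0 [] = block (r 1) (s 1) := by
        rw [hγ', splitOn_lword, List.range_succ_eq_map]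
        simp
      have hx1 : 0 < r 0 → 0 < r 1 + s 1 := by
        intro hrpos
        rcases hcond with h | h | h | h
        · omega
        · exact hg.2 0 (Nat.succ_pos N) (Nat.mul_pos hrpos (by omega))
        · rw [hsu, List.getD_cons_succ, hblk1, count_a_block] at h
          omega
        · rw [hsu, List.getD_cons_succ, hblk1, count_b_block] at h
          omega
      refine ⟨N + 1, r, fun i => if i = 0 then s 0 + 1 else s i, ⟨?_, ?_⟩, ?_⟩
      · beta_reduce
        rw [if_neg (Nat.succ_ne_zero N)]
        exact hg.1
      · intro i hi hpos
        beta_reduce at hpos ⊢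
        rw [if_neg (Nat.succ_ne_zero i)]
        rcases Nat.eq_zero_or_pos i with rfl | hipos
        · refine hx1 ?_
          rcases Nat.eq_zero_or_pos (r 0) with h0 | h0
          · rw [h0] at hpos; simp at hpos
          · exact h0
        · rw [if_neg (by omega)] at hpos
          exact hg.2 i hi hpos
      · rw [lword_succ]
        have hfun : (fun i => if i + 1 = 0 then s 0 + 1 else s (i + 1)) =
            fun i => s (i + 1) := funext fun i => if_neg (Nat.succ_ne_zero i)
        rw [if_pos rfl, hfun, hγ', hr0, hs0]
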